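/- Let H, G : (0,∞) × ℝ → ℝ be C¹ in t and C² in x, suppose 2·G'' = G'·G + 3·H'' and ∂_t G = 3·H'' + G'·G + H'·G + G'·H (where ' = ∂_x). Define F = −G/3. Then ∂_t F = (8/3)·F'' + (1/3)·H'' + H'·F + F'·H + F'·F. In particular, F solves the chordal-type annulus drift PDE ∂_t Λ = (κ/2)Λ'' + (3 − κ/2)H'' + ΛH' + HΛ' + ΛΛ' with κ = 16/3. -/

import Mathlib

theorem kappa_sixteen_thirds_drift_pde (H G : ℝ → ℝ → ℝ)
    (hHx : ∀ t, ContDiff ℝ 2 (H t)) (hGx : ∀ t, ContDiff ℝ 2 (G t))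
    (hGt : ∀ x, Differentiable ℝ fun t => G t x)
    (halg : ∀ t x : ℝ, 0 < t →
      2 * deriv (deriv (G t)) x = deriv (G t) x * G t x + 3 * deriv (deriv (H t)) x)
    (hPDE : ∀ t x : ℝ, 0 < t →
      deriv (fun s => G s x) t =
        3 * deriv (deriv (H t)) x + deriv (G t) x * G t x + deriv (H t) x * G t x +
          deriv (G t) x * H t x) :
    ∀ t x : ℝ, 0 < t →
      deriv (fun s => -G s x / 3) t =
        8 / 3 * deriv (deriv (fun y => -G t y / 3)) x +
          1 / 3 * deriv (deriv (H t)) x +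
          deriv (H t) x * (-G t x / 3) +
          deriv (fun y => -G t y / 3) x * H t x +
          deriv (fun y => -G t y / 3) x * (-G t x / 3) := by
  intro t x ht
  have hGd : Differentiable ℝ (G t) := (hGx t).differentiable two_ne_zero
  have hF : (fun y => -G t y / 3) = fun y => (-1/3) * G t y := by
    funext y; ring
  have hF1 : ∀ y, deriv (fun y => -G t y / 3) y = (-1/3) * deriv (G t) y := by
    intro y
    rw [hF, deriv_const_mul _ (hGd y)]
  have hF2 : deriv (deriv (fun y => -G t y / 3)) x = (-1/3) * deriv (deriv (G t)) x := by
    have : deriv (fun y => -G t y / 3) = fun y => (-1/3) * deriv (G t) y := funext hF1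
    rw [this, deriv_const_mul]
    exact ((hGx t).iterate_deriv' 1 1).differentiable one_ne_zero |>.differentiableAt
  have hFt : deriv (fun s => -G s x / 3) t = (-1/3) * deriv (fun s => G s x) t := by
    have : (fun s => -G s x / 3) = fun s => (-1/3) * G s x := by funext s; ring
    rw [this, deriv_const_mul _ (hGt x t)]
  rw [hFt, hF2, hF1, hPDE t x ht]
  have h2 := halg t x ht
  nlinarith [h2]
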